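/- Let X = (X₁,…,X_d) be a random vector whose joint distribution function F is a MEV distribution with unit Fréchet marginals, and set l(x₁,…,x_d) = −log F(x₁,…,x_d). Then for all x₁,…,x_d > 0, Var( F₁(X₁)^{x₁} ∨ … ∨ F_d(X_d)^{x_d} ) = l(x₁,…,x_d) / ( (2 + l(x₁,…,x_d)) · (1 + l(x₁,…,x_d))² ). -/

import Mathlib

open MeasureTheory Filter Finset

/-- The joint distribution function of the random vector `X` under `μ`. -/
noncomputable def jointCDF {Ω : Type*} [MeasurableSpace Ω] (μ : Measure Ω) {d : ℕ}
    (X : Fin d → Ω → ℝ) (x : Fin d → ℝ) : ℝ :=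
  (μ {ω | ∀ i, X i ω ≤ x i}).toReal

/-- The marginal distribution function of the `i`-th coordinate of `X` under `μ`. -/
noncomputable def margCDF {Ω : Type*} [MeasurableSpace Ω] (μ : Measure Ω) {d : ℕ}
    (X : Fin d → Ω → ℝ) (i : Fin d) (u : ℝ) : ℝ :=
  (μ {ω | X i ω ≤ u}).toReal

/-- `l^{(I₁,I₂)}(x,y) = -log F(a₁,…,a_d)` where `aᵢ = x` on `I₁`, `aᵢ = y` on `I₂` and
`aᵢ = ∞` otherwise (taking the limit of `F` in those arguments, i.e. dropping the
corresponding constraints). -/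
noncomputable def mevL {Ω : Type*} [MeasurableSpace Ω] (μ : Measure Ω) {d : ℕ}
    (X : Fin d → Ω → ℝ) (I₁ I₂ : Finset (Fin d)) (x y : ℝ) : ℝ :=
  -Real.log (μ {ω | (∀ i ∈ I₁, X i ω ≤ x) ∧ (∀ j ∈ I₂, X j ω ≤ y)}).toReal

/-- The extremal coefficient `ε_I = l^{(I,∅)}(1,1)` of the sub-vector `X_I`. -/
noncomputable def extCoef {Ω : Type*} [MeasurableSpace Ω] (μ : Measure Ω) {d : ℕ}
    (X : Fin d → Ω → ℝ) (I : Finset (Fin d)) : ℝ :=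
  mevL μ X I ∅ 1 1

/-- `M(I) = max_{i ∈ I} F_i(X_i)`. -/
noncomputable def Msub {Ω : Type*} [MeasurableSpace Ω] (μ : Measure Ω) {d : ℕ}
    (X : Fin d → Ω → ℝ) (I : Finset (Fin d)) (hI : I.Nonempty) (ω : Ω) : ℝ :=
  I.sup' hI fun i => margCDF μ X i (X i ω)

/-- The stable tail dependence function `l(x₁,…,x_d) = -log F(x₁,…,x_d)`. -/
noncomputable def stdf {Ω : Type*} [MeasurableSpace Ω] (μ : Measure Ω) {d : ℕ}
    (X : Fin d → Ω → ℝ) (x : Fin d → ℝ) : ℝ :=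
  -Real.log (jointCDF μ X x)

/-- `X` has a multivariate extreme value (max-stable) distribution with unit Fréchet
marginals under the probability measure `μ`. -/
structure IsMEVFrechet {Ω : Type*} [MeasurableSpace Ω] (μ : Measure Ω) {d : ℕ}
    (X : Fin d → Ω → ℝ) : Prop where
  meas : ∀ i, Measurable (X i)
  frechet : ∀ i, ∀ u : ℝ, 0 < u → margCDF μ X i u = Real.exp (-u⁻¹)
  maxStable : ∀ t : ℝ, 0 < t → ∀ x : Fin d → ℝ, (∀ i, 0 < x i) →
    jointCDF μ X (fun i => t * x i) ^ t = jointCDF μ X x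


section MEVAux

variable {Ω : Type*} [MeasurableSpace Ω] {μ : Measure Ω} [IsProbabilityMeasure μ]
  {d : ℕ} {X : Fin d → Ω → ℝ}

lemma margCDF_mono (i : Fin d) : Monotone (margCDF μ X i) := fun u v huv =>
  ENNReal.toReal_mono (measure_ne_top μ _) (measure_mono fun ω h => le_trans h huv)

lemma margCDF_nonneg (i : Fin d) (u : ℝ) : 0 ≤ margCDF μ X i u := ENNReal.toReal_nonneg

lemma margCDF_le_one (i : Fin d) (u : ℝ) : margCDF μ X i u ≤ 1 := by
  have := ENNReal.toReal_mono (measure_ne_top μ Set.univ)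
    (measure_mono (Set.subset_univ {ω | X i ω ≤ u}))
  simpa [measure_univ, margCDF] using this

lemma null_nonpos (hX : IsMEVFrechet μ X) (i : Fin d) : μ {ω | X i ω ≤ 0} = 0 := by
  have key : ∀ n : ℕ, (μ {ω | X i ω ≤ 0}).toReal ≤ Real.exp (-((n : ℝ) + 1)) := by
    intro n
    have hpos : (0:ℝ) < ((n:ℝ)+1)⁻¹ := by positivity
    have h1 : (μ {ω | X i ω ≤ 0}).toReal ≤ margCDF μ X i ((n+1:ℝ)⁻¹) :=
      ENNReal.toReal_mono (measure_ne_top μ _)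
        (measure_mono fun ω h => le_trans h (le_of_lt hpos))
    rwa [hX.frechet i _ hpos, inv_inv] at h1
  have hlim : Filter.Tendsto (fun n : ℕ => Real.exp (-((n : ℝ) + 1))) Filter.atTop (nhds 0) := by
    apply Real.tendsto_exp_atBot.comp
    apply Filter.tendsto_neg_atTop_atBot.comp
    exact Filter.tendsto_atTop_add_const_right _ 1 tendsto_natCast_atTop_atTop
  have h0 : (μ {ω | X i ω ≤ 0}).toReal ≤ 0 := ge_of_tendsto' hlim key
  have h0' : (μ {ω | X i ω ≤ 0}).toReal = 0 := le_antisymm h0 ENNReal.toReal_nonneg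
  rcases (ENNReal.toReal_eq_zero_iff _).mp h0' with h | h
  · exact h
  · exact absurd h (measure_ne_top μ _)

lemma jointCDF_nonneg (x : Fin d → ℝ) : 0 ≤ jointCDF μ X x := ENNReal.toReal_nonneg

lemma jointCDF_pos (hd : 0 < d) (hX : IsMEVFrechet μ X) {x : Fin d → ℝ}
    (hx : ∀ i, 0 < x i) : 0 < jointCDF μ X x := by
  rcases lt_or_eq_of_le (jointCDF_nonneg (μ := μ) (X := X) x) with h | h
  · exact h
  exfalso
  have hzero : ∀ t : ℝ, 0 < t → jointCDF μ X (fun i => t * x i) = 0 := by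
    intro t ht
    have h1 := hX.maxStable t ht x hx
    rw [← h] at h1
    have h2 := jointCDF_nonneg (μ := μ) (X := X) (fun i => t * x i)
    by_contra hne
    have : (0:ℝ) < jointCDF μ X (fun i => t * x i) := lt_of_le_of_ne h2 (Ne.symm hne)
    have := Real.rpow_pos_of_pos this t
    rw [h1] at this
    exact lt_irrefl 0 this
  have hnull : ∀ n : ℕ, μ {ω | ∀ i, X i ω ≤ ((n:ℝ)+1) * x i} = 0 := by
    intro n
    have := hzero ((n:ℝ)+1) (by positivity)
    unfold jointCDF at this
    rcases (ENNReal.toReal_eq_zero_iff _).mp this with h' | h'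
    · exact h'
    · exact absurd h' (measure_ne_top μ _)
  have hcover : (Set.univ : Set Ω) ⊆ ⋃ n : ℕ, {ω | ∀ i, X i ω ≤ ((n:ℝ)+1) * x i} := by
    intro ω _
    have hne : (Finset.univ : Finset (Fin d)).Nonempty := ⟨⟨0, hd⟩, Finset.mem_univ _⟩
    obtain ⟨n, hn⟩ := exists_nat_ge (Finset.univ.sup' hne (fun i => X i ω / x i))
    refine Set.mem_iUnion.mpr ⟨n, fun i => ?_⟩
    have h1 : X i ω / x i ≤ (n:ℝ) :=
      le_trans (Finset.le_sup' (fun i => X i ω / x i) (Finset.mem_univ i)) hn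
    have h2 : X i ω / x i ≤ (n:ℝ) + 1 := by linarith
    calc X i ω = (X i ω / x i) * x i := (div_mul_cancel₀ _ (ne_of_gt (hx i))).symm
    _ ≤ ((n:ℝ)+1) * x i := by
        exact mul_le_mul_of_nonneg_right h2 (le_of_lt (hx i))
  have : μ Set.univ = 0 := le_antisymm
    (le_trans (measure_mono hcover) (le_of_eq (measure_iUnion_null hnull))) (zero_le)
  simp [measure_univ] at this

lemma jointCDF_lt_one (hd : 0 < d) (hX : IsMEVFrechet μ X) {x : Fin d → ℝ}
    (hx : ∀ i, 0 < x i) : jointCDF μ X x < 1 := by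
  set i0 : Fin d := ⟨0, hd⟩
  have h1 : jointCDF μ X x ≤ margCDF μ X i0 (x i0) :=
    ENNReal.toReal_mono (measure_ne_top μ _) (measure_mono fun ω h => h i0)
  have h2 : margCDF μ X i0 (x i0) = Real.exp (-(x i0)⁻¹) := hX.frechet i0 _ (hx i0)
  have h3 : Real.exp (-(x i0)⁻¹) < 1 := by
    have : -(x i0)⁻¹ < 0 := neg_neg_iff_pos.mpr (by have := hx i0; positivity)
    simpa using Real.exp_lt_one_iff.mpr this
  exact lt_of_le_of_lt (h1.trans_eq h2) h3

end MEVAux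

section MEVAux2

variable {Ω : Type*} [MeasurableSpace Ω] {μ : Measure Ω} [IsProbabilityMeasure μ]
  {d : ℕ} {X : Fin d → Ω → ℝ} {x : Fin d → ℝ}

lemma Y_measurable (hX : IsMEVFrechet μ X) (hne : (Finset.univ : Finset (Fin d)).Nonempty) :
    Measurable (fun ω => Finset.univ.sup' hne (fun i => margCDF μ X i (X i ω) ^ x i)) := by
  have heq : (fun ω => Finset.univ.sup' hne (fun i => margCDF μ X i (X i ω) ^ x i))
      = Finset.univ.sup' hne (fun i => fun ω => margCDF μ X i (X i ω) ^ x i) := by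
    funext ω; rw [Finset.sup'_apply]
  rw [heq]
  exact Finset.measurable_sup' hne fun i _ =>
    ((margCDF_mono i).measurable.comp (hX.meas i)).pow measurable_const

lemma Y_nonneg (hne : (Finset.univ : Finset (Fin d)).Nonempty) (ω : Ω) :
    0 ≤ Finset.univ.sup' hne (fun i => margCDF μ X i (X i ω) ^ x i) :=
  le_trans (Real.rpow_nonneg (margCDF_nonneg hne.choose (X hne.choose ω)) (x hne.choose))
    (Finset.le_sup' (fun i => margCDF μ X i (X i ω) ^ x i) (Finset.mem_univ hne.choose))

lemma Y_le_one (hx : ∀ i, 0 < x i) (hne : (Finset.univ : Finset (Fin d)).Nonempty) (ω : Ω) :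
    Finset.univ.sup' hne (fun i => margCDF μ X i (X i ω) ^ x i) ≤ 1 :=
  Finset.sup'_le _ _ fun i _ =>
    Real.rpow_le_one (margCDF_nonneg _ _) (margCDF_le_one _ _) (le_of_lt (hx i))

lemma cdfY (hd : 0 < d) (hX : IsMEVFrechet μ X) (hx : ∀ i, 0 < x i)
    (hne : (Finset.univ : Finset (Fin d)).Nonempty) {t : ℝ} (ht0 : 0 < t) (ht1 : t < 1) :
    (μ {ω | Finset.univ.sup' hne (fun i => margCDF μ X i (X i ω) ^ x i) ≤ t}).toReal
      = t ^ stdf μ X x := by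
  have hc0 : 0 < jointCDF μ X x := jointCDF_pos hd hX hx
  have hL : 0 < -Real.log t := neg_pos.mpr (Real.log_neg ht0 ht1)
  set s : ℝ := (-Real.log t)⁻¹ with hs_def
  have hs : 0 < s := inv_pos.mpr hL
  set A : Set Ω := {ω | ∀ i, 0 < X i ω} with hA_def
  have hAc : μ Aᶜ = 0 := by
    have hsub : Aᶜ ⊆ ⋃ i, {ω | X i ω ≤ 0} := by
      intro ω hω
      simp only [hA_def, Set.mem_compl_iff, Set.mem_setOf_eq, not_forall, not_lt] at hω
      obtain ⟨i, hi⟩ := hω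
      exact Set.mem_iUnion.mpr ⟨i, hi⟩
    exact measure_mono_null hsub (measure_iUnion_null fun i => null_nonpos hX i)
  have hset : {ω | Finset.univ.sup' hne (fun i => margCDF μ X i (X i ω) ^ x i) ≤ t} ∩ A
      = {ω | ∀ i, X i ω ≤ s * x i} ∩ A := by
    ext ω
    simp only [Set.mem_inter_iff, Set.mem_setOf_eq, Finset.sup'_le_iff, Finset.mem_univ,
      true_implies, hA_def]
    refine and_congr_left fun hA' => forall_congr' fun i => ?_
    have hXi : 0 < X i ω := hA' i
    rw [hX.frechet i _ hXi, ← Real.exp_mul, ← Real.le_log_iff_exp_le ht0]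
    have hdiv : s * x i = x i / (-Real.log t) := inv_mul_eq_div _ _
    rw [hdiv, le_div_iff₀ hL, neg_mul, neg_le]
    have hd2 : (X i ω)⁻¹ * x i = x i / X i ω := inv_mul_eq_div _ _
    rw [hd2, le_div_iff₀ hXi, mul_comm]
  have h1 : μ {ω | Finset.univ.sup' hne (fun i => margCDF μ X i (X i ω) ^ x i) ≤ t}
      = μ {ω | ∀ i, X i ω ≤ s * x i} := by
    rw [← measure_inter_conull hAc, hset, measure_inter_conull hAc]
  have h2 := hX.maxStable s hs x hx
  have hJ : jointCDF μ X (fun i => s * x i) = jointCDF μ X x ^ s⁻¹ := by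
    have h3 := congrArg (fun z : ℝ => z ^ s⁻¹) h2
    try simp only at h3
    rwa [← Real.rpow_mul (jointCDF_nonneg _), mul_inv_cancel₀ (ne_of_gt hs),
      Real.rpow_one] at h3
  have h4 : (μ {ω | ∀ i, X i ω ≤ s * x i}).toReal = jointCDF μ X (fun i => s * x i) := rfl
  rw [h1, h4, hJ, hs_def, inv_inv, Real.rpow_def_of_pos hc0, Real.rpow_def_of_pos ht0]
  show Real.exp (Real.log (jointCDF μ X x) * -Real.log t)
      = Real.exp (Real.log t * -Real.log (jointCDF μ X x))
  ring_nf

lemma survY (hd : 0 < d) (hX : IsMEVFrechet μ X) (hx : ∀ i, 0 < x i)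
    (hne : (Finset.univ : Finset (Fin d)).Nonempty) {t : ℝ} (ht0 : 0 < t) (ht1 : t < 1) :
    (μ {ω | t < Finset.univ.sup' hne (fun i => margCDF μ X i (X i ω) ^ x i)}).toReal
      = 1 - t ^ stdf μ X x := by
  have hY : Measurable (fun ω => Finset.univ.sup' hne (fun i => margCDF μ X i (X i ω) ^ x i)) :=
    Y_measurable hX hne
  have hms : MeasurableSet
      {ω | Finset.univ.sup' hne (fun i => margCDF μ X i (X i ω) ^ x i) ≤ t} :=
    measurableSet_le hY measurable_const
  have hcompl : {ω | t < Finset.univ.sup' hne (fun i => margCDF μ X i (X i ω) ^ x i)}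
      = {ω | Finset.univ.sup' hne (fun i => margCDF μ X i (X i ω) ^ x i) ≤ t}ᶜ := by
    ext ω; simp [not_le]
  rw [hcompl, measure_compl hms (measure_ne_top μ _), measure_univ,
    ENNReal.toReal_sub_of_le prob_le_one ENNReal.one_ne_top, ENNReal.toReal_one,
    cdfY hd hX hx hne ht0 ht1]

lemma indInt {r : ℝ} (hr : 0 < r) :
    ∫ t in Set.Ioi (0:ℝ), Set.indicator (Set.Ioo 0 1) (fun t => 1 - t ^ r) t = r / (r + 1) := by
  rw [MeasureTheory.setIntegral_indicator measurableSet_Ioo,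
    Set.inter_eq_self_of_subset_right Set.Ioo_subset_Ioi_self,
    ← MeasureTheory.integral_Ioc_eq_integral_Ioo,
    ← intervalIntegral.integral_of_le (by norm_num : (0:ℝ) ≤ 1)]
  have hint : IntervalIntegrable (fun t : ℝ => t ^ r) volume 0 1 :=
    intervalIntegral.intervalIntegrable_rpow' (by linarith)
  rw [intervalIntegral.integral_sub intervalIntegrable_const hint,
    intervalIntegral.integral_const, integral_rpow (Or.inl (by linarith)),
    Real.one_rpow, Real.zero_rpow (by positivity)]
  have h1 : r + 1 ≠ 0 := by positivity
  field_simp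
  simp only [sub_zero, smul_eq_mul, one_mul]; ring

end MEVAux2
open ProbabilityTheory in
/-- For a MEV distribution with unit Fréchet marginals and `l = -log F`,
`Var(F₁(X₁)^{x₁} ∨ … ∨ F_d(X_d)^{x_d}) = l/((2 + l)(1 + l)²)` with `l = l(x₁,…,x_d)`. -/
theorem statement15 {Ω : Type*} [MeasurableSpace Ω] (μ : Measure Ω) [IsProbabilityMeasure μ]
    {d : ℕ} (hd : 0 < d) (X : Fin d → Ω → ℝ) (hX : IsMEVFrechet μ X)
    (x : Fin d → ℝ) (hx : ∀ i, 0 < x i) :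
    variance (fun ω => Finset.univ.sup' ⟨⟨0, hd⟩, Finset.mem_univ _⟩
        (fun i => margCDF μ X i (X i ω) ^ x i)) μ
      = stdf μ X x / ((2 + stdf μ X x) * (1 + stdf μ X x) ^ 2) := by
  have hne : (Finset.univ : Finset (Fin d)).Nonempty := ⟨⟨0, hd⟩, Finset.mem_univ _⟩
  set Y : Ω → ℝ := fun ω => Finset.univ.sup' hne (fun i => margCDF μ X i (X i ω) ^ x i) with hY_def
  set l : ℝ := stdf μ X x with hl_def
  have hl_pos : 0 < l := by
    rw [hl_def]
    show 0 < -Real.log (jointCDF μ X x)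
    exact neg_pos.mpr (Real.log_neg (jointCDF_pos hd hX hx) (jointCDF_lt_one hd hX hx))
  have hYmeas : Measurable Y := Y_measurable hX hne
  have hYnn : ∀ ω, 0 ≤ Y ω := Y_nonneg hne
  have hY1 : ∀ ω, Y ω ≤ 1 := Y_le_one hx hne
  have hMem : MeasureTheory.MemLp Y 2 μ :=
    MeasureTheory.MemLp.of_bound hYmeas.aestronglyMeasurable 1
      (MeasureTheory.ae_of_all _ fun ω => by
        rw [Real.norm_eq_abs, abs_of_nonneg (hYnn ω)]; exact hY1 ω)
  have hInt : MeasureTheory.Integrable Y μ := hMem.integrable (by norm_num)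
  have hInt2 : MeasureTheory.Integrable (fun ω => Y ω ^ 2) μ := by
    have hMem2 : MeasureTheory.MemLp (fun ω => Y ω ^ 2) 2 μ :=
      MeasureTheory.MemLp.of_bound ((hYmeas.pow measurable_const).aestronglyMeasurable) 1
        (MeasureTheory.ae_of_all _ fun ω => by
          rw [Real.norm_eq_abs, abs_of_nonneg (by positivity)]
          exact pow_le_one₀ (hYnn ω) (hY1 ω))
    exact hMem2.integrable (by norm_num)
  have EY : ∫ ω, Y ω ∂μ = l / (l + 1) := by
    rw [hInt.integral_eq_integral_meas_lt (MeasureTheory.ae_of_all _ hYnn)]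
    simp only [measureReal_def]
    have hcong : Set.EqOn (fun t => (μ {a | t < Y a}).toReal)
        (Set.indicator (Set.Ioo 0 1) (fun t => 1 - t ^ l)) (Set.Ioi 0) := by
      intro t ht
      have ht0 : (0:ℝ) < t := ht
      dsimp only
      rcases lt_or_ge t 1 with h1 | h1
      · rw [Set.indicator_of_mem (Set.mem_Ioo.mpr ⟨ht0, h1⟩)]
        exact survY hd hX hx hne ht0 h1
      · rw [Set.indicator_of_notMem (fun hmem => absurd hmem.2 (not_lt.mpr h1))]
        have hemp : {a | t < Y a} = ∅ := by
          ext a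
          simp only [Set.mem_setOf_eq, Set.mem_empty_iff_false, iff_false, not_lt]
          exact le_trans (hY1 a) h1
        simp [hemp]
    rw [MeasureTheory.setIntegral_congr_fun measurableSet_Ioi hcong, indInt hl_pos]
  have EY2 : ∫ ω, Y ω ^ 2 ∂μ = l / (l + 2) := by
    rw [hInt2.integral_eq_integral_meas_lt (MeasureTheory.ae_of_all _ fun ω => by positivity)]
    simp only [measureReal_def]
    have hcong : Set.EqOn (fun t => (μ {a | t < Y a ^ 2}).toReal)
        (Set.indicator (Set.Ioo 0 1) (fun t => 1 - t ^ (l / 2))) (Set.Ioi 0) := by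
      intro t ht
      have ht0 : (0:ℝ) < t := ht
      dsimp only
      rcases lt_or_ge t 1 with h1 | h1
      · have hst : {a | t < Y a ^ 2} = {a | Real.sqrt t < Y a} := by
          ext a
          simp only [Set.mem_setOf_eq]
          constructor
          · intro h
            have hYa : 0 < Y a := by nlinarith [hYnn a]
            exact (Real.sqrt_lt' hYa).mpr h
          · intro h
            have hYa : 0 < Y a := lt_of_le_of_lt (Real.sqrt_nonneg t) h
            exact (Real.sqrt_lt' hYa).mp h
        have hsq1 : Real.sqrt t < 1 := by
          have := (Real.sqrt_lt' one_pos (x := t)).mpr (by nlinarith)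
          simpa using this
        rw [Set.indicator_of_mem (Set.mem_Ioo.mpr ⟨ht0, h1⟩), hst,
          survY hd hX hx hne (Real.sqrt_pos.mpr ht0) hsq1]
        congr 1
        rw [Real.sqrt_eq_rpow, ← Real.rpow_mul ht0.le, hl_def]
        ring_nf
      · rw [Set.indicator_of_notMem (fun hmem => absurd hmem.2 (not_lt.mpr h1))]
        have hemp : {a | t < Y a ^ 2} = ∅ := by
          ext a
          simp only [Set.mem_setOf_eq, Set.mem_empty_iff_false, iff_false, not_lt]
          exact le_trans (pow_le_one₀ (hYnn a) (hY1 a)) h1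
        simp [hemp]
    rw [MeasureTheory.setIntegral_congr_fun measurableSet_Ioi hcong, indInt (by linarith)]
    have h2 : l + 2 ≠ 0 := by positivity
    have h3 : l / 2 + 1 ≠ 0 := by positivity
    field_simp
    try ring
  have hvar := variance_eq_sub hMem
  rw [hvar]
  have hEY2' : μ[Y ^ 2] = l / (l + 2) := by
    rw [← EY2]; congr 1
  have hEY' : μ[Y] = l / (l + 1) := EY
  rw [hEY2', hEY']
  have h1 : l + 1 ≠ 0 := by positivity
  have h2 : l + 2 ≠ 0 := by positivity
  have h3 : 2 + l ≠ 0 := by positivity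
  have h4 : 1 + l ≠ 0 := by positivity
  field_simp
  ring
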